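/- Let f(r) = r²/ℓ² − bℓ/r + λ²ℓ²/r² with ℓ, b, λ > 0. Then f has a positive root (i.e. the black string has a horizon) if and only if the charge parameter satisfies λ² ≤ (3/4)·(b/ (4^{1/3}))^{4/3}·4^{1/3}, equivalently the dimensionless parameter q² = λ²/b^{4/3} satisfies 4q²/3 ≤ (1/4)^{1/3}; in particular if 4(4q²/3)³ ≤ 1 then f(r) = 0 has a positive real solution. -/

import Mathlib

open Real

private lemma cube_rpow_third (a : ℝ) (ha : 0 ≤ a) : (a ^ ((1:ℝ)/3)) ^ 3 = a := by
  rw [← Real.rpow_natCast (a ^ ((1:ℝ)/3)) 3, ← Real.rpow_mul ha]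
  norm_num

private lemma cube_rpow_43 (b : ℝ) (hb : 0 ≤ b) : (b ^ ((4:ℝ)/3)) ^ 3 = b ^ 4 := by
  rw [← Real.rpow_natCast (b ^ ((4:ℝ)/3)) 3, ← Real.rpow_mul hb,
    show ((4:ℝ)/3 * (3:ℕ)) = ((4:ℕ):ℝ) by norm_num, Real.rpow_natCast]

private lemma exists_root_iff_poly (ℓ b lam : ℝ)
    (hℓ : 0 < ℓ) (hb : 0 < b) (hlam : 0 < lam) :
    (∃ r : ℝ, 0 < r ∧ r ^ 2 / ℓ ^ 2 - b * ℓ / r + lam ^ 2 * ℓ ^ 2 / r ^ 2 = 0) ↔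
      256 * lam ^ 6 ≤ 27 * b ^ 4 := by
  obtain ⟨c, hc⟩ : ∃ c : ℝ, c = b * ℓ ^ 3 := ⟨_, rfl⟩
  have hcpos : 0 < c := by rw [hc]; positivity
  obtain ⟨x, hxpos, hx3⟩ : ∃ x : ℝ, 0 < x ∧ x ^ 3 = c / 4 :=
    ⟨(c/4) ^ ((1:ℝ)/3), by positivity, cube_rpow_third _ (by positivity)⟩
  have h27 : (3 * x ^ 4) ^ 3 = 27 / 256 * c ^ 4 := by
    have h : (3 * x ^ 4) ^ 3 = 27 * (x ^ 3) ^ 4 := by ring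
    rw [h, hx3]; ring
  have hc4 : c ^ 4 = b ^ 4 * ℓ ^ 12 := by rw [hc]; ring
  have hl12 : (0:ℝ) < ℓ ^ 12 := by positivity
  constructor
  · rintro ⟨r, hr, hfr⟩
    have hg : r ^ 4 - c * r + lam ^ 2 * ℓ ^ 4 = 0 := by
      have h := hfr
      rw [hc]
      field_simp at h
      nlinarith [h]
    have hfact : 0 ≤ (r - x) ^ 2 * (r ^ 2 + 2 * r * x + 3 * x ^ 2) :=
      mul_nonneg (sq_nonneg _) (by positivity)
    have h4 : r * x ^ 3 = r * (c / 4) := by rw [hx3]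
    have hkey : lam ^ 2 * ℓ ^ 4 ≤ 3 * x ^ 4 := by nlinarith [hfact, h4, hg]
    have hcube : (lam ^ 2 * ℓ ^ 4) ^ 3 ≤ (3 * x ^ 4) ^ 3 :=
      pow_le_pow_left₀ (by positivity) hkey 3
    have h2 : lam ^ 6 * ℓ ^ 12 ≤ 27 / 256 * (b ^ 4 * ℓ ^ 12) := by
      nlinarith [hcube, h27, hc4]
    exact (mul_le_mul_iff_left₀ hl12).mp (by nlinarith [h2])
  · intro hpoly
    have hlx : lam ^ 2 * ℓ ^ 4 ≤ 3 * x ^ 4 := by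
      have h1 : (lam ^ 2 * ℓ ^ 4) ^ 3 ≤ (3 * x ^ 4) ^ 3 := by
        nlinarith [mul_le_mul_of_nonneg_right hpoly hl12.le, h27, hc4]
      exact le_of_pow_le_pow_left₀ (by norm_num) (by positivity) h1
    have hgx : x ^ 4 - c * x + lam ^ 2 * ℓ ^ 4 ≤ 0 := by
      have h4 : x * x ^ 3 = x * (c / 4) := by rw [hx3]
      nlinarith [hlx, h4]
    obtain ⟨R, hxR, hR1, hRc⟩ : ∃ R : ℝ, x ≤ R ∧ 1 ≤ R ∧ c ≤ R :=
      ⟨1 + c + x, by nlinarith, by nlinarith, by nlinarith⟩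
    have hRpos : 0 < R := lt_of_lt_of_le one_pos hR1
    have hgR : 0 ≤ R ^ 4 - c * R + lam ^ 2 * ℓ ^ 4 := by
      have h1 : c * R ≤ R * R := mul_le_mul_of_nonneg_right hRc hRpos.le
      have h2 : R * R ≤ R ^ 4 := by nlinarith [sq_nonneg R, mul_nonneg (sq_nonneg R) (sub_nonneg.mpr hR1)]
      nlinarith [h1, h2, mul_pos (mul_pos hlam hlam) (pow_pos hℓ 4)]
    have hcont : ContinuousOn (fun r : ℝ => r ^ 4 - c * r + lam ^ 2 * ℓ ^ 4) (Set.Icc x R) := by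
      apply Continuous.continuousOn; fun_prop
    obtain ⟨r, hrmem, hgr⟩ := intermediate_value_Icc hxR hcont ⟨hgx, hgR⟩
    have hrpos : 0 < r := lt_of_lt_of_le hxpos hrmem.1
    refine ⟨r, hrpos, ?_⟩
    have hgr' : r ^ 4 - c * r + lam ^ 2 * ℓ ^ 4 = 0 := hgr
    clear hcont hgr hrmem hgx hgR hx3 hlx hxR hR1 hRc
    have h : r ^ 2 / ℓ ^ 2 - b * ℓ / r + lam ^ 2 * ℓ ^ 2 / r ^ 2
        = (r ^ 4 - c * r + lam ^ 2 * ℓ ^ 4) / (r ^ 2 * ℓ ^ 2) := by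
      rw [hc]; field_simp
    rw [h, hgr', zero_div]

theorem black_string_horizon_existence (ℓ b lam : ℝ)
    (hℓ : 0 < ℓ) (hb : 0 < b) (hlam : 0 < lam) :
    ((∃ r : ℝ, 0 < r ∧ r ^ 2 / ℓ ^ 2 - b * ℓ / r + lam ^ 2 * ℓ ^ 2 / r ^ 2 = 0) ↔
      4 * (lam ^ 2 / b ^ ((4 : ℝ) / 3)) / 3 ≤ ((1 : ℝ) / 4) ^ ((1 : ℝ) / 3)) ∧
    (4 * (4 * (lam ^ 2 / b ^ ((4 : ℝ) / 3)) / 3) ^ 3 ≤ 1 →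
      ∃ r : ℝ, 0 < r ∧ r ^ 2 / ℓ ^ 2 - b * ℓ / r + lam ^ 2 * ℓ ^ 2 / r ^ 2 = 0) := by
  have hb43 : (0:ℝ) < b ^ ((4:ℝ)/3) := Real.rpow_pos_of_pos hb _
  have hb43c : (b ^ ((4:ℝ)/3)) ^ 3 = b ^ 4 := cube_rpow_43 b hb.le
  have hq3 : (((1:ℝ)/4) ^ ((1:ℝ)/3)) ^ 3 = 1/4 := cube_rpow_third _ (by norm_num)
  have hA : (0:ℝ) ≤ 4 * (lam ^ 2 / b ^ ((4:ℝ)/3)) / 3 := by positivity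
  have hQ : (0:ℝ) ≤ ((1:ℝ)/4) ^ ((1:ℝ)/3) := Real.rpow_nonneg (by norm_num) _
  have hexp : (4 * (lam ^ 2 / b ^ ((4:ℝ)/3)) / 3) ^ 3 = 64 * lam ^ 6 / (27 * b ^ 4) := by
    rw [← hb43c]; field_simp; ring
  have hiff : (4 * (lam ^ 2 / b ^ ((4:ℝ)/3)) / 3 ≤ ((1:ℝ)/4) ^ ((1:ℝ)/3)) ↔
      256 * lam ^ 6 ≤ 27 * b ^ 4 := by
    constructor
    · intro h
      have h3 : (4 * (lam ^ 2 / b ^ ((4:ℝ)/3)) / 3) ^ 3 ≤ (((1:ℝ)/4) ^ ((1:ℝ)/3)) ^ 3 :=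
        pow_le_pow_left₀ hA h 3
      rw [hq3, hexp, div_le_iff₀ (by positivity)] at h3
      nlinarith [h3]
    · intro h
      have h3 : (4 * (lam ^ 2 / b ^ ((4:ℝ)/3)) / 3) ^ 3 ≤ (((1:ℝ)/4) ^ ((1:ℝ)/3)) ^ 3 := by
        rw [hq3, hexp, div_le_iff₀ (by positivity)]
        nlinarith [h]
      exact le_of_pow_le_pow_left₀ (by norm_num) hQ h3
  have hmain := exists_root_iff_poly ℓ b lam hℓ hb hlam
  refine ⟨hmain.trans hiff.symm, ?_⟩
  intro h
  rw [hmain, ← hiff]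
  have h3 : (4 * (lam ^ 2 / b ^ ((4:ℝ)/3)) / 3) ^ 3 ≤ (((1:ℝ)/4) ^ ((1:ℝ)/3)) ^ 3 := by
    rw [hq3]; linarith
  exact le_of_pow_le_pow_left₀ (by norm_num) hQ h3
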